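/- Let π be a chain on finite V and ω1, ω2 coordinated strict partial orders with (ω1 ∪ ω2)^+ a strict partial order. If (add^*_{≤_π}(ω1) ∪ ω2)^+ is a strict partial order, then (add^*_{≤_π}(ω1) ∪ ω2)^+ ⊆ add^*_{≤_π}((ω1 ∪ ω2)^+). (Postulate P4 for the induced operator.) -/

import Mathlib

open Classical

variable {V : Type*}

/-- Transitive closure of a set of pairs (a relation). -/
def tc (R : Set (V × V)) : Set (V × V) :=
  {p | Relation.TransGen (fun a b => (a, b) ∈ R) p.1 p.2}

/-- A strict partial order: transitive and irreflexive. -/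
def IsSPO (R : Set (V × V)) : Prop :=
  (∀ a b c, (a, b) ∈ R → (b, c) ∈ R → (a, c) ∈ R) ∧ ∀ a, (a, a) ∉ R

/-- The chain determined by a duplicate-free list `l` (earlier = better):
`(i,j)` is in the chain iff `i` occurs strictly before `j` in `l`. -/
def chainSet (l : List V) : Set (V × V) := {p | [p.1, p.2].Sublist l}

/-- The direct comparisons of the chain `l`: pairs of consecutive elements. -/
def dirSet (l : List V) : Set (V × V) := {p | p ∈ l.zip l.tail}

/-- Cycle-free part of `(π ∪ ω)⁺`. -/
def cf (l : List V) (w : Set (V × V)) : Set (V × V) :=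
  {p | p ∈ tc (chainSet l ∪ w) ∧ (p.2, p.1) ∉ tc (chainSet l ∪ w)}

/-- Cyclic part of `π` with respect to `ω`: direct comparisons involved in a cycle. -/
def cyc (l : List V) (w : Set (V × V)) : Set (V × V) :=
  {p | p ∈ dirSet l ∧ (p.2, p.1) ∈ tc (chainSet l ∪ w)}

/-- A total preorder on a set `S` of comparisons. -/
def IsTotalPreorderOn (le : V × V → V × V → Prop) (S : Set (V × V)) : Prop :=
  (∀ a ∈ S, ∀ b ∈ S, ∀ c ∈ S, le a b → le b c → le a c) ∧
    (∀ a ∈ S, ∀ b ∈ S, le a b ∨ le b a)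

/-- A strict linear order on a set `S` of comparisons. -/
def IsLinearOn (lt : V × V → V × V → Prop) (S : Set (V × V)) : Prop :=
  (∀ a ∈ S, ∀ b ∈ S, ∀ c ∈ S, lt a b → lt b c → lt a c) ∧
    (∀ a ∈ S, ∀ b ∈ S, a ≠ b → lt a b ∨ lt b a) ∧ (∀ a ∈ S, ¬ lt a a)

/-- The `≤`-minimal (best) elements of `S`. -/
def minset (le : V × V → V × V → Prop) (S : Set (V × V)) : Set (V × V) :=
  {c | c ∈ S ∧ ∀ d ∈ S, le c d}

/-- Remaining elements of `S` after peeling off the first `n` levels. -/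
def rem (le : V × V → V × V → Prop) (S : Set (V × V)) : ℕ → Set (V × V)
  | 0 => S
  | n + 1 => rem le S n \ minset le (rem le S n)

/-- The `i`-th level (for `i ≥ 1`) of `S` under the total preorder `le`. -/
def level (le : V × V → V × V → Prop) (S : Set (V × V)) (i : ℕ) : Set (V × V) :=
  minset le (rem le S (i - 1))

/-- The addition operator: `addSeq le l w 0 = (ω ∪ cf(π,ω))⁺`, and step `i+1`
tries to add level `i+1` of `dir_π` intersected with `cyc(π,ω)`. -/
noncomputable def addSeq (le : V × V → V × V → Prop) (l : List V) (w : Set (V × V)) :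
    ℕ → Set (V × V)
  | 0 => tc (w ∪ cf l w)
  | i + 1 =>
    if IsSPO (tc (addSeq le l w i ∪ (minset le (rem le (dirSet l) i) ∩ cyc l w))) then
      tc (addSeq le l w i ∪ (minset le (rem le (dirSet l) i) ∩ cyc l w))
    else addSeq le l w i

/-- The fixed point of the addition operator. -/
noncomputable def addStar (le : V × V → V × V → Prop) (l : List V) (w : Set (V × V)) :
    Set (V × V) :=
  ⋃ i, addSeq le l w i

/-- The set of `π`-completions of `ω`. -/
def completions (l : List V) (w : Set (V × V)) : Set (Set (V × V)) :=
  {R | ∃ δ, δ ⊆ dirSet l ∧ R = tc (w ∪ δ) ∧ IsSPO R}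

/-- `ω₁` and `ω₂` are coordinated with respect to the chain `l`. -/
def Coordinated (l : List V) (w1 w2 : Set (V × V)) : Prop :=
  ∀ δ ⊆ cyc l w1,
    (∀ p ∈ δ, p ∉ tc (w1 ∪ w2) ∧ (p.2, p.1) ∉ tc (w1 ∪ w2)) →
    IsSPO (tc (w1 ∪ δ)) → IsSPO (tc (tc (w1 ∪ w2) ∪ δ))

/-! ### Auxiliary lemmas -/

section Aux

lemma tc_trans' {S : Set (V × V)} {a b c : V} (h1 : (a, b) ∈ tc S) (h2 : (b, c) ∈ tc S) :
    (a, c) ∈ tc S := Relation.TransGen.trans h1 h2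

lemma subset_tc {S : Set (V × V)} : S ⊆ tc S := by
  intro p hp
  exact Relation.TransGen.single (show ((p.1, p.2) : V × V) ∈ S from hp)

lemma mem_tc_single {S : Set (V × V)} {a b : V} (h : (a, b) ∈ S) : (a, b) ∈ tc S :=
  Relation.TransGen.single h

lemma tc_mono {S T : Set (V × V)} (h : S ⊆ T) : tc S ⊆ tc T := by
  intro p hp
  obtain ⟨x, y⟩ := p
  have hp' : Relation.TransGen (fun a b => (a, b) ∈ S) x y := hp
  show Relation.TransGen (fun a b => (a, b) ∈ T) x y
  clear hp
  induction hp' with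
  | single hab => exact Relation.TransGen.single (h hab)
  | tail _ hab ih => exact ih.tail (h hab)

lemma tc_min {S T : Set (V × V)} (hST : S ⊆ T)
    (hT : ∀ {a b c : V}, (a, b) ∈ T → (b, c) ∈ T → (a, c) ∈ T) : tc S ⊆ T := by
  have key : ∀ a b : V, Relation.TransGen (fun x y => (x, y) ∈ S) a b → (a, b) ∈ T := by
    intro a b hab
    induction hab with
    | single h => exact hST h
    | tail _ h ih => exact hT ih (hST h)
  intro p hp
  exact show ((p.1, p.2) : V × V) ∈ T from key p.1 p.2 hp

lemma tc_idem {S : Set (V × V)} : tc (tc S) = tc S :=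
  Set.Subset.antisymm (tc_min (le_refl _) (fun h1 h2 => tc_trans' h1 h2)) (tc_mono subset_tc)

lemma tc_union_tc_left {S T : Set (V × V)} : tc (tc S ∪ T) = tc (S ∪ T) := by
  apply Set.Subset.antisymm
  · apply tc_min _ (fun h1 h2 => tc_trans' h1 h2)
    apply Set.union_subset
    · exact tc_mono Set.subset_union_left
    · exact fun p hp => subset_tc (Or.inr hp)
  · exact tc_mono (Set.union_subset_union_left _ subset_tc)

lemma dir_subset_chain : ∀ (l : List V), dirSet l ⊆ chainSet l
  | [] => by intro p hp; simp [dirSet, List.zip] at hp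
  | [x] => by intro p hp; simp [dirSet, List.zip] at hp
  | x :: y :: t => by
      intro p hp
      simp only [dirSet, Set.mem_setOf_eq, List.tail_cons, List.zip_cons_cons,
        List.mem_cons] at hp
      rcases hp with rfl | hp
      · show [(x, y).1, (x, y).2].Sublist (x :: y :: t)
        exact (List.nil_sublist t).cons₂ y |>.cons₂ x
      · have := dir_subset_chain (y :: t) (by simpa [dirSet] using hp)
        exact (this : [p.1, p.2].Sublist (y :: t)).cons x

lemma chain_mem {l : List V} {a b : V} (h : (a, b) ∈ chainSet l) : a ∈ l ∧ b ∈ l := by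
  have hsub : [a, b] ⊆ l := (h : [a, b].Sublist l).subset
  exact ⟨hsub (by simp), hsub (by simp)⟩

lemma chain_trichotomy (l : List V) : ∀ {x y : V}, x ∈ l → y ∈ l →
    x = y ∨ (x, y) ∈ chainSet l ∨ (y, x) ∈ chainSet l := by
  induction l with
  | nil => intro x y hx _; exact absurd hx List.not_mem_nil
  | cons a t ih =>
      intro x y hx hy
      rcases List.mem_cons.mp hx with rfl | hx'
      · rcases List.mem_cons.mp hy with rfl | hy'
        · exact Or.inl rfl
        · exact Or.inr (Or.inl (show [x, y].Sublist (x :: t) from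
            (List.singleton_sublist.mpr hy').cons₂ x))
      · rcases List.mem_cons.mp hy with rfl | hy'
        · exact Or.inr (Or.inr (show [y, x].Sublist (y :: t) from
            (List.singleton_sublist.mpr hx').cons₂ y))
        · rcases ih hx' hy' with h | h | h
          · exact Or.inl h
          · exact Or.inr (Or.inl ((h : [x, y].Sublist t).cons a))
          · exact Or.inr (Or.inr ((h : [y, x].Sublist t).cons a))

end Aux

section Main

variable (le : V × V → V × V → Prop) (l : List V) (w1 w2 : Set (V × V))

/-- Phase predicate for the walk induction in the key lemma. -/
def Ph (u v z : V) : Prop :=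
  (v = z ∨ (v, z) ∈ tc (chainSet l ∪ w1)) ∨
  (∃ y, (v = y ∨ (v, y) ∈ tc (chainSet l ∪ w1)) ∧
      (y, z) ∈ tc (addStar le l w1 ∪ w2)) ∨
  (∃ d, d ∈ l ∧ (u = d ∨ (u, d) ∈ tc (chainSet l ∪ w1)) ∧
      ¬ (d = v ∨ (d, v) ∈ tc (chainSet l ∪ w1)) ∧
      (d = z ∨ (d, z) ∈ tc (addStar le l w1 ∪ w2)))

lemma chstar
    (hspo : IsSPO (tc (addStar le l w1 ∪ w2)))
    {u v a b : V}
    (huv : (u, v) ∈ cf l w1)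
    (hab : (a, b) ∈ chainSet l)
    (hua : u = a ∨ (u, a) ∈ tc (chainSet l ∪ w1))
    (hbv : b = v ∨ (b, v) ∈ tc (chainSet l ∪ w1))
    (hvu : (v, u) ∈ tc (chainSet l ∪ tc (w1 ∪ w2))) : False := by
  -- abbreviations
  set T1 : Set (V × V) := tc (chainSet l ∪ w1) with hT1
  set R : Set (V × V) := tc (addStar le l w1 ∪ w2) with hR
  have hT1t : ∀ {x y z : V}, (x, y) ∈ T1 → (y, z) ∈ T1 → (x, z) ∈ T1 :=
    fun h1 h2 => tc_trans' h1 h2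
  have hRt : ∀ {x y z : V}, (x, y) ∈ R → (y, z) ∈ R → (x, z) ∈ R :=
    fun h1 h2 => tc_trans' h1 h2
  have hRR : ∀ {x y : V}, (x, y) ∈ R → (y, x) ∈ R → False :=
    fun h1 h2 => hspo.2 _ (hRt h1 h2)
  have hCT1 : ∀ {x y : V}, (x, y) ∈ chainSet l → (x, y) ∈ T1 :=
    fun h => mem_tc_single (Or.inl h)
  -- cf l w1 ⊆ R
  have hcfR : ∀ {x y : V}, (x, y) ∈ cf l w1 → (x, y) ∈ R := by
    intro x y h
    have h0 : (x, y) ∈ addSeq le l w1 0 :=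
      mem_tc_single (Or.inr h)
    have h1 : (x, y) ∈ addStar le l w1 := Set.mem_iUnion.mpr ⟨0, h0⟩
    exact mem_tc_single (Or.inl h1)
  -- om ⊆ R
  have homR : ∀ {x y : V}, (x, y) ∈ tc (w1 ∪ w2) → (x, y) ∈ R := by
    intro x y h
    have : tc (w1 ∪ w2) ⊆ R := by
      apply tc_min _ (fun h1 h2 => hRt h1 h2)
      intro p hp
      rcases hp with hp | hp
      · have h0 : p ∈ addSeq le l w1 0 := subset_tc (Or.inl hp)
        exact subset_tc (Or.inl (Set.mem_iUnion.mpr ⟨0, h0⟩))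
      · exact subset_tc (Or.inr hp)
    exact this h
  have huv1 : (u, v) ∈ T1 := huv.1
  have huv2 : (v, u) ∉ T1 := huv.2
  -- composition helpers (refl on the left / right)
  have compL : ∀ {x y z : V}, (x = y ∨ (x, y) ∈ T1) → (y, z) ∈ T1 → (x, z) ∈ T1 := by
    intro x y z h1 h2
    rcases h1 with rfl | h1
    · exact h2
    · exact hT1t h1 h2
  have compR : ∀ {x y z : V}, (x, y) ∈ T1 → (y = z ∨ (y, z) ∈ T1) → (x, z) ∈ T1 := by
    intro x y z h1 h2
    rcases h2 with rfl | h2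
    · exact h1
    · exact hT1t h1 h2
  -- positioning of jumps
  have pos : ∀ {z z' : V}, (z, z') ∈ chainSet l → (z', z) ∈ T1 →
      (u = z ∨ (u, z) ∈ T1) ∨ (z, v) ∈ T1 := by
    intro z z' hzz' hrev
    have hzl := (chain_mem hzz').1
    have hal := (chain_mem hab).1
    have habT : (a, b) ∈ T1 := hCT1 hab
    have hzz'T : (z, z') ∈ T1 := hCT1 hzz'
    rcases chain_trichotomy l hzl hal with rfl | hza | haz
    · exact Or.inl hua
    · -- z strictly before a
      have hz'l := (chain_mem hzz').2
      rcases chain_trichotomy l hz'l hal with rfl | hz'a | haz'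
      · -- z' = a
        exact Or.inr (compR (hT1t hzz'T habT) hbv)
      · -- z' before a
        exact Or.inr (compR (hT1t (hT1t hzz'T (hCT1 hz'a)) habT) hbv)
      · -- a before z' , z before a : a inside the jump interval
        have haz1 : (a, z) ∈ T1 := hT1t (hCT1 haz') hrev
        exact Or.inl (Or.inr (compL hua haz1))
    · -- a before z
      exact Or.inl (Or.inr (compL hua (hCT1 haz)))
  -- the step lemma
  have step : ∀ z z' : V, Ph le l w1 w2 u v z →
      ((z, z') ∈ chainSet l ∪ tc (w1 ∪ w2)) → Ph le l w1 w2 u v z' := by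
    intro z z' ph hedge
    rcases hedge with hC | hom
    swap
    · -- an ω'-edge, in R
      have heR : (z, z') ∈ R := homR hom
      rcases ph with hA | ⟨y, hy, hyz⟩ | ⟨d, hdl, hud, hdv, hdz⟩
      · exact Or.inr (Or.inl ⟨z, hA, heR⟩)
      · exact Or.inr (Or.inl ⟨y, hy, hRt hyz heR⟩)
      · refine Or.inr (Or.inr ⟨d, hdl, hud, hdv, Or.inr ?_⟩)
        rcases hdz with rfl | hdz
        · exact heR
        · exact hRt hdz heR
    · -- a chain edge
      by_cases hrev : (z', z) ∈ T1
      swap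
      · -- a cf-edge, in R
        have heR : (z, z') ∈ R := hcfR ⟨hCT1 hC, hrev⟩
        rcases ph with hA | ⟨y, hy, hyz⟩ | ⟨d, hdl, hud, hdv, hdz⟩
        · exact Or.inr (Or.inl ⟨z, hA, heR⟩)
        · exact Or.inr (Or.inl ⟨y, hy, hRt hyz heR⟩)
        · refine Or.inr (Or.inr ⟨d, hdl, hud, hdv, Or.inr ?_⟩)
          rcases hdz with rfl | hdz
          · exact heR
          · exact hRt hdz heR
      · -- a jump
        by_cases hdown : v = z ∨ (v, z) ∈ T1
        · exact Or.inl (Or.inr (compL hdown (hCT1 hC)))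
        by_cases hzv : z = v ∨ (z, v) ∈ T1
        · -- d-type jump : contradiction
          have hzvT : (z, v) ∈ T1 := by
            rcases hzv with rfl | h
            · exact absurd (Or.inl rfl) hdown
            · exact h
          exfalso
          rcases ph with hA | ⟨y, hy, hyz⟩ | ⟨d, hdl, hud, hdv, hdz⟩
          · exact hdown hA
          · -- firewall to y
            have fw : (z, y) ∈ cf l w1 := by
              refine ⟨compR hzvT hy, fun hyzT => ?_⟩
              rcases hy with rfl | hy
              · exact hdown (Or.inr hyzT)
              · exact hdown (Or.inr (hT1t hy hyzT))
            exact hRR (hcfR fw) hyz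
          · -- firewall with d
            have hzl := (chain_mem hC).1
            rcases chain_trichotomy l hzl hdl with rfl | hzd | hdz2
            · exact hdv (Or.inr hzvT)
            · -- z before d
              have fw : (z, d) ∈ cf l w1 := by
                refine ⟨hCT1 hzd, fun hdzT => ?_⟩
                exact hdv (Or.inr (hT1t hdzT hzvT))
              rcases hdz with rfl | hdz
              · exact fw.2 fw.1
              · exact hRR (hcfR fw) hdz
            · -- d before z
              exact hdv (Or.inr (hT1t (hCT1 hdz2) hzvT))
        · -- c-only jump : enter / update phase C with d := z'
          have hcz : u = z ∨ (u, z) ∈ T1 := by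
            rcases pos hC hrev with h | h
            · exact h
            · exact absurd (Or.inr h) hzv
          have hz'l := (chain_mem hC).2
          refine Or.inr (Or.inr ⟨z', hz'l, ?_, ?_, Or.inl rfl⟩)
          · rcases hcz with rfl | hcz
            · exact Or.inr (hCT1 hC)
            · exact Or.inr (hT1t hcz (hCT1 hC))
          · intro hcon
            apply hzv
            rcases hcon with rfl | hcon
            · exact Or.inr (hCT1 hC)
            · exact Or.inr (hT1t (hCT1 hC) hcon)
  -- run the induction along the path from v to u
  have main : ∀ z : V,
      Relation.TransGen (fun p q => (p, q) ∈ chainSet l ∪ tc (w1 ∪ w2)) v z →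
      Ph le l w1 w2 u v z := by
    intro z hz
    induction hz with
    | single h => exact step _ _ (Or.inl (Or.inl rfl)) h
    | tail _ h ih => exact step _ _ ih h
  have phu : Ph le l w1 w2 u v u := main u hvu
  -- endgame
  rcases phu with hA | ⟨y, hy, hyu⟩ | ⟨d, hdl, hud, hdv, hdz⟩
  · rcases hA with rfl | hA
    · exact huv2 huv1
    · exact huv2 hA
  · have fw : (u, y) ∈ cf l w1 := by
      refine ⟨compR huv1 hy, fun hyuT => ?_⟩
      rcases hy with rfl | hy
      · exact huv2 hyuT
      · exact huv2 (hT1t hy hyuT)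
    exact hRR (hcfR fw) hyu
  · rcases hdz with rfl | hdz
    · exact hdv (Or.inr huv1)
    · rcases hud with rfl | hud
      · exact hdv (Or.inr huv1)
      · have fw : (u, d) ∈ cf l w1 := by
          refine ⟨hud, fun hduT => ?_⟩
          exact hdv (Or.inr (hT1t hduT huv1))
        exact hRR (hcfR fw) hdz


/-- Under `hspo`, a cf(ω₁)-pair whose reverse is in `T(ω')` lies in `tc (w1 ∪ w2)`. -/
lemma cf_sub
    (hspo : IsSPO (tc (addStar le l w1 ∪ w2))) :
    cf l w1 ⊆ cf l (tc (w1 ∪ w2)) ∪ tc (w1 ∪ w2) := by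
  intro p hp
  obtain ⟨x, y⟩ := p
  by_cases h : (y, x) ∈ tc (chainSet l ∪ tc (w1 ∪ w2))
  · -- the pair must be derivable within w1 alone
    right
    have key : ∀ x' y' : V,
        Relation.TransGen (fun p q => (p, q) ∈ chainSet l ∪ w1) x' y' →
        (x = x' ∨ (x, x') ∈ tc (chainSet l ∪ w1)) →
        (y' = y ∨ (y', y) ∈ tc (chainSet l ∪ w1)) →
        Relation.TransGen (fun p q => (p, q) ∈ w1) x' y' := by
      intro x' y' hpath
      induction hpath with
      | single he =>
          intro hx hy
          rcases he with hC | hw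
          · exact absurd (chstar le l w1 w2 hspo hp hC hx hy h) not_false
          · exact Relation.TransGen.single hw
      | @tail b c hxb hbc ih =>
          intro hx hy
          have hbcT : (b, c) ∈ tc (chainSet l ∪ w1) := mem_tc_single hbc
          have hby : b = y ∨ (b, y) ∈ tc (chainSet l ∪ w1) := by
            rcases hy with rfl | hy
            · exact Or.inr hbcT
            · exact Or.inr (tc_trans' hbcT hy)
          have ih' := ih hx hby
          rcases hbc with hC | hw
          · -- chain edge inside the pair: contradiction via chstar
            have hxb' : x = b ∨ (x, b) ∈ tc (chainSet l ∪ w1) := by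
              have : (x', b) ∈ tc (chainSet l ∪ w1) := hxb
              rcases hx with rfl | hx
              · exact Or.inr this
              · exact Or.inr (tc_trans' hx this)
            exact absurd (chstar le l w1 w2 hspo hp hC hxb' hy h) not_false
          · exact ih'.tail hw
    have h1 : Relation.TransGen (fun p q => (p, q) ∈ w1) x y :=
      key x y hp.1 (Or.inl rfl) (Or.inl rfl)
    exact tc_mono (Set.subset_union_left) h1
  · left
    refine ⟨?_, h⟩
    have : tc (chainSet l ∪ w1) ⊆ tc (chainSet l ∪ tc (w1 ∪ w2)) := by
      apply tc_mono
      apply Set.union_subset_union_right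
      intro q hq
      exact subset_tc (Or.inl hq)
    exact this hp.1

/-- Every `addSeq` stage for `w1` is inside `T(ω₁)`. -/
lemma addSeq_sub_T1 : ∀ i, addSeq le l w1 i ⊆ tc (chainSet l ∪ w1) := by
  intro i
  induction i with
  | zero =>
      show tc (w1 ∪ cf l w1) ⊆ tc (chainSet l ∪ w1)
      apply tc_min _ (fun h1 h2 => tc_trans' h1 h2)
      apply Set.union_subset
      · exact fun p hp => subset_tc (Or.inr hp)
      · exact fun p hp => hp.1
  | succ i ih =>
      show (@ite (Set (V × V)) _ (Classical.propDecidable _) _ _) ⊆ _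
      split_ifs with h
      · apply tc_min _ (fun h1 h2 => tc_trans' h1 h2)
        apply Set.union_subset ih
        intro p hp
        exact subset_tc (Or.inl (dir_subset_chain l hp.2.1))
      · exact ih

/-- `R ∪ cf(ω')` generates an irreflexive transitive closure. -/
lemma tc_R_cf_irrefl
    (hspo : IsSPO (tc (addStar le l w1 ∪ w2))) :
    ∀ x : V, (x, x) ∉ tc (tc (addStar le l w1 ∪ w2) ∪ cf l (tc (w1 ∪ w2))) := by
  set R : Set (V × V) := tc (addStar le l w1 ∪ w2) with hR
  set T' : Set (V × V) := tc (chainSet l ∪ tc (w1 ∪ w2)) with hT'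
  have hRT' : R ⊆ T' := by
    apply tc_min _ (fun h1 h2 => tc_trans' h1 h2)
    apply Set.union_subset
    · intro p hp
      obtain ⟨i, hi⟩ := Set.mem_iUnion.mp hp
      have h1 : p ∈ tc (chainSet l ∪ w1) := addSeq_sub_T1 le l w1 i hi
      have : tc (chainSet l ∪ w1) ⊆ T' := by
        apply tc_mono
        exact Set.union_subset_union_right _ (fun q hq => subset_tc (Or.inl hq))
      exact this h1
    · intro p hp
      exact subset_tc (Or.inr (subset_tc (Or.inr hp)))
  have key : ∀ p q : V,
      Relation.TransGen (fun s t => (s, t) ∈ R ∪ cf l (tc (w1 ∪ w2))) p q →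
      (q = p ∨ (q, p) ∈ T') → (p, q) ∈ R := by
    intro p q hpq
    induction hpq with
    | single he =>
        intro hqp
        rcases he with hr | hcf
        · exact hr
        · exfalso
          rcases hqp with rfl | hqp
          · exact hcf.2 hcf.1
          · exact hcf.2 hqp
    | @tail b c hpb hbc ih =>
        intro hqp
        have hbcT' : (b, c) ∈ T' := by
          rcases hbc with hr | hcf
          · exact hRT' hr
          · exact hcf.1
        have hbp : b = p ∨ (b, p) ∈ T' := by
          rcases hqp with rfl | hqp
          · exact Or.inr hbcT'
          · exact Or.inr (tc_trans' hbcT' hqp)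
        have hpb' : (p, b) ∈ R := ih hbp
        rcases hbc with hr | hcf
        · exact tc_trans' hpb' hr
        · exfalso
          apply hcf.2
          have hpbT' : (p, b) ∈ T' := hRT' hpb'
          rcases hqp with rfl | hqp
          · exact hpbT'
          · exact tc_trans' hqp hpbT'
  intro x hx
  exact hspo.2 x (key x x hx (Or.inl rfl))

/-- The level-synchronised invariant. -/
lemma inv_lemma
    (hspo : IsSPO (tc (addStar le l w1 ∪ w2))) :
    ∀ i, tc (addSeq le l w1 i ∪ w2) ⊆ addSeq le l (tc (w1 ∪ w2)) i ∧
      addSeq le l (tc (w1 ∪ w2)) i ⊆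
        tc (tc (addStar le l w1 ∪ w2) ∪ cf l (tc (w1 ∪ w2))) := by
  set om : Set (V × V) := tc (w1 ∪ w2) with hom
  set R : Set (V × V) := tc (addStar le l w1 ∪ w2) with hR
  have homR : om ⊆ R := by
    apply tc_min _ (fun h1 h2 => tc_trans' h1 h2)
    apply Set.union_subset
    · intro p hp
      have h0 : p ∈ addSeq le l w1 0 := subset_tc (Or.inl hp)
      exact subset_tc (Or.inl (Set.mem_iUnion.mpr ⟨0, h0⟩))
    · exact fun p hp => subset_tc (Or.inr hp)
  have hcfR : cf l w1 ⊆ R := by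
    intro p hp
    have h0 : p ∈ addSeq le l w1 0 := subset_tc (Or.inr hp)
    exact subset_tc (Or.inl (Set.mem_iUnion.mpr ⟨0, h0⟩))
  have hw2R : w2 ⊆ R := fun p hp => subset_tc (Or.inr hp)
  have hAstarR : addStar le l w1 ⊆ R := fun p hp => subset_tc (Or.inl hp)
  have hcfsub := cf_sub le l w1 w2 hspo
  intro i
  induction i with
  | zero =>
      constructor
      · show tc (tc (w1 ∪ cf l w1) ∪ w2) ⊆ tc (om ∪ cf l om)
        rw [tc_union_tc_left]
        apply tc_min _ (fun h1 h2 => tc_trans' h1 h2)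
        apply Set.union_subset
        · apply Set.union_subset
          · intro p hp
            exact subset_tc (Or.inl (subset_tc (Or.inl hp)))
          · intro p hp
            rcases hcfsub hp with h | h
            · exact subset_tc (Or.inr h)
            · exact subset_tc (Or.inl h)
        · intro p hp
          exact subset_tc (Or.inl (subset_tc (Or.inr hp)))
      · show tc (om ∪ cf l om) ⊆ tc (R ∪ cf l om)
        exact tc_mono (Set.union_subset_union_left _ homR)
  | succ i ih =>
      obtain ⟨ih1, ih2⟩ := ih
      set Si : Set (V × V) := minset le (rem le (dirSet l) i) ∩ cyc l w1 with hSi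
      set Si' : Set (V × V) := minset le (rem le (dirSet l) i) ∩ cyc l om with hSi'
      have hSS : Si ⊆ Si' := by
        apply Set.inter_subset_inter_right
        intro p hp
        refine ⟨hp.1, ?_⟩
        have : tc (chainSet l ∪ w1) ⊆ tc (chainSet l ∪ om) := by
          apply tc_mono
          exact Set.union_subset_union_right _ (fun q hq => subset_tc (Or.inl hq))
        exact this hp.2
      have hS'cf : ∀ p ∈ Si', p ∈ Si ∨ p ∈ cf l w1 := by
        intro p hp
        by_cases h : (p.2, p.1) ∈ tc (chainSet l ∪ w1)
        · exact Or.inl ⟨hp.1, hp.2.1, h⟩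
        · refine Or.inr ⟨?_, h⟩
          exact subset_tc (Or.inl (dir_subset_chain l hp.2.1))
      have hAB : addSeq le l w1 i ⊆ addSeq le l om i := by
        intro p hp
        exact ih1 (subset_tc (Or.inl hp))
      have hw2B : w2 ⊆ addSeq le l om i := by
        intro p hp
        exact ih1 (subset_tc (Or.inr hp))
      by_cases hA : IsSPO (tc (addSeq le l w1 i ∪ Si))
      · have hA1 : addSeq le l w1 (i + 1) = tc (addSeq le l w1 i ∪ Si) := by
          show (if _ then _ else _) = _
          rw [if_pos hA]
        have hSiR : Si ⊆ R := by
          intro p hp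
          have h1 : p ∈ addSeq le l w1 (i + 1) := by
            rw [hA1]; exact subset_tc (Or.inr hp)
          exact hAstarR (Set.mem_iUnion.mpr ⟨i + 1, h1⟩)
        have hBS'sub : addSeq le l om i ∪ Si' ⊆ tc (R ∪ cf l om) := by
          apply Set.union_subset ih2
          intro p hp
          rcases hS'cf p hp with h | h
          · exact subset_tc (Or.inl (hSiR h))
          · exact subset_tc (Or.inl (hcfR h))
        have hB : IsSPO (tc (addSeq le l om i ∪ Si')) := by
          constructor
          · exact fun a b c h1 h2 => tc_trans' h1 h2
          · intro x hx
            have : (x, x) ∈ tc (R ∪ cf l om) :=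
              tc_min hBS'sub (fun h1 h2 => tc_trans' h1 h2) hx
            exact tc_R_cf_irrefl le l w1 w2 hspo x this
        have hB1 : addSeq le l om (i + 1) = tc (addSeq le l om i ∪ Si') := by
          show (if _ then _ else _) = _
          rw [if_pos hB]
        constructor
        · rw [hA1, hB1, tc_union_tc_left]
          apply tc_min _ (fun h1 h2 => tc_trans' h1 h2)
          apply Set.union_subset
          · apply Set.union_subset
            · intro p hp
              exact subset_tc (Or.inl (hAB hp))
            · intro p hp
              exact subset_tc (Or.inr (hSS hp))
          · intro p hp
            exact subset_tc (Or.inl (hw2B hp))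
        · rw [hB1]
          exact tc_min hBS'sub (fun h1 h2 => tc_trans' h1 h2)
      · have hA1 : addSeq le l w1 (i + 1) = addSeq le l w1 i := by
          show (if _ then _ else _) = _
          rw [if_neg hA]
        have hB : ¬ IsSPO (tc (addSeq le l om i ∪ Si')) := by
          intro hB
          apply hA
          constructor
          · exact fun a b c h1 h2 => tc_trans' h1 h2
          · intro x hx
            apply hB.2 x
            exact tc_mono (Set.union_subset_union hAB hSS) hx
        have hB1 : addSeq le l om (i + 1) = addSeq le l om i := by
          show (if _ then _ else _) = _
          rw [if_neg hB]
        rw [hA1, hB1]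
        exact ⟨ih1, ih2⟩

lemma addSeq_mono_index (w : Set (V × V)) : ∀ i j, i ≤ j → addSeq le l w i ⊆ addSeq le l w j := by
  intro i j hij
  induction j with
  | zero =>
      have : i = 0 := Nat.le_zero.mp hij
      subst this; exact le_refl _
  | succ j ih =>
      rcases Nat.lt_or_ge i (j + 1) with h | h
      · have h1 : addSeq le l w i ⊆ addSeq le l w j := ih (Nat.lt_succ_iff.mp h)
        refine h1.trans ?_
        show addSeq le l w j ⊆ (if _ then _ else _)
        split_ifs with hc
        · exact fun p hp => subset_tc (Or.inl hp)
        · exact le_refl _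
      · have : i = j + 1 := Nat.le_antisymm hij h
        subst this; exact le_refl _

end Main

theorem stmt13 {V : Type*} [Fintype V] (l : List V) (hl : l.Nodup)
    (le : V × V → V × V → Prop) (hle : IsTotalPreorderOn le (dirSet l))
    (w1 w2 : Set (V × V)) (hw1 : IsSPO w1) (hw2 : IsSPO w2)
    (hw12 : IsSPO (tc (w1 ∪ w2))) (hco : Coordinated l w1 w2)
    (hspo : IsSPO (tc (addStar le l w1 ∪ w2))) :
    tc (addStar le l w1 ∪ w2) ⊆ addStar le l (tc (w1 ∪ w2)) := by
  have key : ∀ x y : V,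
      Relation.TransGen (fun p q => (p, q) ∈ addStar le l w1 ∪ w2) x y →
      ∃ n, (x, y) ∈ tc (addSeq le l w1 n ∪ w2) := by
    intro x y hxy
    induction hxy with
    | @single c he =>
        rcases he with h | h
        · obtain ⟨n, hn⟩ := Set.mem_iUnion.mp h
          exact ⟨n, subset_tc (Or.inl hn)⟩
        · exact ⟨0, subset_tc (Or.inr h)⟩
    | @tail b c hxb hbc ih =>
        obtain ⟨n1, hn1⟩ := ih
        have h2 : ∃ n, ((b, c) : V × V) ∈ addSeq le l w1 n ∪ w2 := by
          rcases hbc with h | h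
          · obtain ⟨n, hn⟩ := Set.mem_iUnion.mp h
            exact ⟨n, Or.inl hn⟩
          · exact ⟨0, Or.inr h⟩
        obtain ⟨n2, hn2⟩ := h2
        refine ⟨max n1 n2, ?_⟩
        have hm1 : (x, b) ∈ tc (addSeq le l w1 (max n1 n2) ∪ w2) := by
          refine tc_mono ?_ hn1
          exact Set.union_subset_union_left _
            (addSeq_mono_index le l w1 n1 (max n1 n2) (Nat.le_max_left _ _))
        have hm2 : ((b, c) : V × V) ∈ addSeq le l w1 (max n1 n2) ∪ w2 := by
          rcases hn2 with h | h
          · exact Or.inl (addSeq_mono_index le l w1 n2 (max n1 n2) (Nat.le_max_right _ _) h)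
          · exact Or.inr h
        exact tc_trans' hm1 (mem_tc_single hm2)
  intro p hp
  obtain ⟨x, y⟩ := p
  obtain ⟨n, hn⟩ := key x y hp
  have h1 : (x, y) ∈ addSeq le l (tc (w1 ∪ w2)) n :=
    (inv_lemma le l w1 w2 hspo n).1 hn
  exact Set.mem_iUnion.mpr ⟨n, h1⟩
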